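/- Let A and B be ARSs with NF(B) ⊆ NF(A) such that either (1) →_B ⊆ →_A^+, or (2) →_B ⊆ ↔_A* and B is terminating. If A is complete (terminating and confluent), then B is complete and normalization equivalent to A (i.e., →_A^! = →_B^!). -/

import Mathlib

namespace KB

-- Generic ARS notions
def NF {α : Type _} (r : α → α → Prop) (a : α) : Prop := ∀ b, ¬ r a b

def SymmCl {α : Type _} (r : α → α → Prop) (a b : α) : Prop := r a b ∨ r b a

def Conv {α : Type _} (r : α → α → Prop) : α → α → Prop :=
  Relation.ReflTransGen (SymmCl r)

def Joinable {α : Type _} (r : α → α → Prop) (a b : α) : Prop :=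
  ∃ c, Relation.ReflTransGen r a c ∧ Relation.ReflTransGen r b c

def Confluent {α : Type _} (r : α → α → Prop) : Prop :=
  ∀ a b c, Relation.ReflTransGen r a b → Relation.ReflTransGen r a c → Joinable r b c

def Terminating {α : Type _} (r : α → α → Prop) : Prop :=
  WellFounded (fun a b => r b a)

def Complete {α : Type _} (r : α → α → Prop) : Prop := Terminating r ∧ Confluent r

def NormTo {α : Type _} (r : α → α → Prop) (a b : α) : Prop :=
  Relation.ReflTransGen r a b ∧ NF r b

-- First-order terms
inductive Term (F V : Type) : Type where
  | var : V → Term F V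
  | app : F → List (Term F V) → Term F V

variable {F V : Type}

def Term.subst (σ : V → Term F V) : Term F V → Term F V
  | .var x => σ x
  | .app f ts => .app f (ts.attach.map fun t => Term.subst σ t.1)
decreasing_by
  simp only [Term.app.sizeOf_spec]
  have := List.sizeOf_lt_of_mem t.2
  omega

def Term.rename (π : V → V) (t : Term F V) : Term F V :=
  t.subst (fun x => Term.var (π x))

inductive Ctx (F V : Type) : Type where
  | hole : Ctx F V
  | cons : F → List (Term F V) → Ctx F V → List (Term F V) → Ctx F V

def Ctx.fill : Ctx F V → Term F V → Term F V
  | .hole, t => t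
  | .cons f l C r, t => Term.app f (l ++ C.fill t :: r)

abbrev TRS (F V : Type) := Set (Term F V × Term F V)

def Step (R : TRS F V) (s t : Term F V) : Prop :=
  ∃ (C : Ctx F V) (σ : V → Term F V) (l r : Term F V),
    (l, r) ∈ R ∧ s = C.fill (l.subst σ) ∧ t = C.fill (r.subst σ)

inductive InVars (x : V) : Term F V → Prop where
  | var : InVars x (Term.var x)
  | app {f : F} {ts : List (Term F V)} {t : Term F V} :
      t ∈ ts → InVars x t → InVars x (Term.app f ts)

def WellFormedRule (l r : Term F V) : Prop :=
  (∀ x : V, l ≠ Term.var x) ∧ ∀ x, InVars x r → InVars x l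

def IsTRS (R : TRS F V) : Prop := ∀ p ∈ R, WellFormedRule p.1 p.2

inductive Ground : Term F V → Prop where
  | app {f : F} {ts : List (Term F V)} : (∀ t ∈ ts, Ground t) → Ground (Term.app f ts)

def GroundSys (R : TRS F V) : Prop := ∀ p ∈ R, Ground p.1 ∧ Ground p.2

def LeftReduced (R : TRS F V) : Prop := ∀ p ∈ R, NF (Step (R \ {p})) p.1
def RightReduced (R : TRS F V) : Prop := ∀ p ∈ R, NF (Step R) p.2
def Reduced (R : TRS F V) : Prop := LeftReduced R ∧ RightReduced R

def RuleVariant (p q : Term F V × Term F V) : Prop :=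
  ∃ π : V → V, Function.Bijective π ∧ p.1 = q.1.rename π ∧ p.2 = q.2.rename π

def LitSim (R S : TRS F V) : Prop :=
  (∀ p ∈ R, ∃ q ∈ S, RuleVariant p q) ∧ (∀ q ∈ S, ∃ p ∈ R, RuleVariant q p)

def Encompass (s t : Term F V) : Prop :=
  ∃ (C : Ctx F V) (σ : V → Term F V), s = C.fill (t.subst σ)

def PEncompass (s t : Term F V) : Prop := Encompass s t ∧ ¬ Encompass t s

def ReductionOrder (gt : Term F V → Term F V → Prop) : Prop :=
  Transitive gt ∧ WellFounded (fun a b => gt b a) ∧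
  (∀ (C : Ctx F V) s t, gt s t → gt (C.fill s) (C.fill t)) ∧
  (∀ (σ : V → Term F V) s t, gt s t → gt (s.subst σ) (t.subst σ))

-- positions
def subt : List ℕ → Term F V → Option (Term F V)
  | [], t => some t
  | _ :: _, Term.var _ => none
  | i :: p, Term.app _ ts => (ts[i]?).bind (subt p)

def repl : List ℕ → Term F V → Term F V → Option (Term F V)
  | [], _, u => some u
  | _ :: _, Term.var _, _ => none
  | i :: p, Term.app f ts, u =>
      (ts[i]?).bind fun w => (repl p w u).map fun w' => Term.app f (ts.set i w')

def FunPos (p : List ℕ) (t : Term F V) : Prop :=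
  ∃ f ts, subt p t = some (Term.app f ts)

def Unifier (σ : V → Term F V) (s t : Term F V) : Prop := s.subst σ = t.subst σ

def IsMGU (σ : V → Term F V) (s t : Term F V) : Prop :=
  Unifier σ s t ∧ ∀ τ, Unifier τ s t → ∃ ρ, ∀ x, (σ x).subst ρ = τ x

def VarsDisjoint (p q : Term F V × Term F V) : Prop :=
  ∀ x, ¬ ((InVars x p.1 ∨ InVars x p.2) ∧ (InVars x q.1 ∨ InVars x q.2))

def Overlap (R : TRS F V) (l1 r1 : Term F V) (p : List ℕ) (l2 r2 : Term F V) : Prop :=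
  (∃ q ∈ R, RuleVariant (l1, r1) q) ∧
  (∃ q ∈ R, RuleVariant (l2, r2) q) ∧
  VarsDisjoint (l1, r1) (l2, r2) ∧
  FunPos p l2 ∧
  (∃ w, subt p l2 = some w ∧ ∃ σ, Unifier σ l1 w) ∧
  (p = [] → ¬ RuleVariant (l1, r1) (l2, r2))

def CPeak (R : TRS F V) (t : Term F V) (p : List ℕ) (s u : Term F V) : Prop :=
  ∃ (l1 r1 l2 r2 : Term F V) (σ : V → Term F V) (w : Term F V),
    Overlap R l1 r1 p l2 r2 ∧ subt p l2 = some w ∧ IsMGU σ l1 w ∧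
    s = l2.subst σ ∧ u = r2.subst σ ∧
    repl p (l2.subst σ) (r1.subst σ) = some t

def PrimeCPeak (R : TRS F V) (t : Term F V) (p : List ℕ) (s u : Term F V) : Prop :=
  CPeak R t p s u ∧
  ∀ w v, subt p s = some w → (∃ q, q ≠ [] ∧ subt q w = some v) → NF (Step R) v

def PCP (R : TRS F V) : Set (Term F V × Term F V) :=
  { e | ∃ p s, PrimeCPeak R e.1 p s e.2 }

def Nabla (R : TRS F V) (s u w : Term F V) : Prop :=
  Relation.TransGen (Step R) s u ∧ Relation.TransGen (Step R) s w ∧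
  (Joinable (Step R) u w ∨ SymmCl (Step (PCP R)) u w)

-- counted conversions and rewrite sequences
inductive ConvN {α : Type _} (r : α → α → Prop) : ℕ → ℕ → α → α → Prop where
  | refl (a : α) : ConvN r 0 0 a a
  | fwd {l n : ℕ} {a b c : α} : r a b → ConvN r l n b c → ConvN r l (n + 1) a c
  | bwd {l n : ℕ} {a b c : α} : r b a → ConvN r l n b c → ConvN r (l + 1) n a c

inductive StepsN {α : Type _} (r : α → α → Prop) : ℕ → α → α → Prop where
  | refl (a : α) : StepsN r 0 a a
  | step {n : ℕ} {a b c : α} : r a b → StepsN r n b c → StepsN r (n + 1) a c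

def RandomDescent {α : Type _} (r : α → α → Prop) : Prop :=
  ∀ l m a b, ConvN r l m a b → NF r b → ∃ n, StepsN r n a b ∧ n + l = m


section Helpers

variable {α : Type _} {r : α → α → Prop}

lemma rtg_conv {a b : α} (h : Relation.ReflTransGen r a b) : Conv r a b :=
  Relation.ReflTransGen.mono (fun _ _ h => Or.inl h) _ _ h

lemma nf_rtg_eq {a b : α} (hnf : NF r a) (h : Relation.ReflTransGen r a b) : a = b := by
  induction h using Relation.ReflTransGen.head_induction_on with
  | refl => rfl
  | head h' _ _ => exact absurd h' (hnf _)

lemma church_rosser (hconf : Confluent r) {a b : α} (h : Conv r a b) : Joinable r a b := by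
  induction h with
  | refl => exact ⟨a, .refl, .refl⟩
  | tail _ hbc ih =>
    obtain ⟨d, had, hbd⟩ := ih
    cases hbc with
    | inl h =>
      obtain ⟨e, hde, hce⟩ := hconf _ _ _ hbd (Relation.ReflTransGen.single h)
      exact ⟨e, had.trans hde, hce⟩
    | inr h =>
      exact ⟨d, had, (Relation.ReflTransGen.single h).trans hbd⟩

lemma exists_nf (h : Terminating r) (a : α) :
    ∃ b, Relation.ReflTransGen r a b ∧ NF r b := by
  induction a using h.induction with
  | _ a ih =>
    by_cases hnf : NF r a
    · exact ⟨a, .refl, hnf⟩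
    · simp only [NF, not_forall, not_not] at hnf
      obtain ⟨b, hab⟩ := hnf
      obtain ⟨c, hbc, hc⟩ := ih b hab
      exact ⟨c, Relation.ReflTransGen.head hab hbc, hc⟩

lemma unique_nf (hconf : Confluent r) {a b c : α}
    (hab : Relation.ReflTransGen r a b) (hb : NF r b)
    (hac : Relation.ReflTransGen r a c) (hc : NF r c) : b = c := by
  obtain ⟨d, hbd, hcd⟩ := hconf _ _ _ hab hac
  rw [nf_rtg_eq hb hbd, nf_rtg_eq hc hcd]

end Helpers

/-- If NF(B) ⊆ NF(A), and either →B ⊆ →A⁺ or (→B ⊆ ↔A* and B terminating),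
and A is complete, then B is complete and normalization equivalent to A. -/
theorem complete_normalization_equivalent {A : Type _} (rA rB : A → A → Prop)
    (hNF : ∀ a, NF rB a → NF rA a)
    (hcase : (∀ a b, rB a b → Relation.TransGen rA a b) ∨
             ((∀ a b, rB a b → Conv rA a b) ∧ Terminating rB))
    (hA : Complete rA) :
    Complete rB ∧ ∀ a b, NormTo rA a b ↔ NormTo rB a b := by
  obtain ⟨hAterm, hAconf⟩ := hA
  -- reduce both cases to: rB ⊆ Conv rA and Terminating rB
  have hmain : (∀ a b, rB a b → Conv rA a b) ∧ Terminating rB := by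
    cases hcase with
    | inl h =>
      refine ⟨fun a b hab => rtg_conv (h a b hab).to_reflTransGen, ?_⟩
      have hwf : WellFounded (Relation.TransGen fun a b => rA b a) := hAterm.transGen
      exact Subrelation.wf
        (fun {a b} hab => (Relation.transGen_swap).1 (h b a hab)) hwf
    | inr h => exact h
  obtain ⟨hconv, hBterm⟩ := hmain
  -- B-reduction sequences are A-conversions
  have hrtg_conv : ∀ a b, Relation.ReflTransGen rB a b → Conv rA a b := by
    intro a b h
    induction h with
    | refl => exact .refl
    | tail _ hbc ih => exact ih.trans (hconv _ _ hbc)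
  -- B-normalization implies A-normalization
  have hBA : ∀ a b, NormTo rB a b → NormTo rA a b := by
    rintro a b ⟨hab, hb⟩
    have hb' : NF rA b := hNF b hb
    obtain ⟨d, had, hbd⟩ := church_rosser hAconf (hrtg_conv a b hab)
    rw [← nf_rtg_eq hb' hbd] at had
    exact ⟨had, hb'⟩
  have hBconf : Confluent rB := by
    intro a b c hab hac
    obtain ⟨b', hbb', hb'⟩ := exists_nf hBterm b
    obtain ⟨c', hcc', hc'⟩ := exists_nf hBterm c
    have h1 := hBA a b' ⟨hab.trans hbb', hb'⟩
    have h2 := hBA a c' ⟨hac.trans hcc', hc'⟩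
    have : b' = c' := unique_nf hAconf h1.1 h1.2 h2.1 h2.2
    exact ⟨b', hbb', this ▸ hcc'⟩
  refine ⟨⟨hBterm, hBconf⟩, fun a b => ⟨?_, hBA a b⟩⟩
  rintro ⟨hab, hb⟩
  obtain ⟨c, hac, hc⟩ := exists_nf hBterm a
  have h1 := hBA a c ⟨hac, hc⟩
  have : b = c := unique_nf hAconf hab hb h1.1 h1.2
  exact ⟨this ▸ hac, this ▸ hc⟩

end KB
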